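/- As R → +∞, g_NA(z_NA(R), R) converges to the limit E := (k12/(k11+k12))/k11 · (1 − k12/(2(k11+k12))) + (k11/(k11+k12))/k12 · (1 − k11/(2(k11+k12))) + (k22/(k22+k21))/k21 · (1 − k22/(2(k22+k21))) + (k21/(k22+k21))/k22 · (1 − k21/(2(k22+k21))). -/

import Mathlib

/-- The Principal's reduced objective `g_NA(z, R)` in the no-Planner (Nash) model. -/
noncomputable def gNA (k11 k12 k21 k22 : ℝ) (z : Fin 2 → Fin 2 → ℝ) (R : ℝ) : ℝ :=
  -(R / 2) * (z 0 0 + z 0 1 - 1) ^ 2 - (R / 2) * (z 1 0 + z 1 1 - 1) ^ 2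
    + z 0 0 / k11 + z 0 1 / k12 + z 1 0 / k21 + z 1 1 / k22
    - (z 0 0) ^ 2 / (2 * k11) - (z 0 1) ^ 2 / (2 * k12)
    - (z 1 0) ^ 2 / (2 * k21) - (z 1 1) ^ 2 / (2 * k22)

/-- The optimal sensitivities `z_NA(R)` in the no-Planner (Nash) model. -/
noncomputable def zNA (k11 k12 k21 k22 R : ℝ) : Fin 2 → Fin 2 → ℝ :=
  ![![(1 + R * k12) / (1 + R * (k11 + k12)), (1 + R * k11) / (1 + R * (k11 + k12))],
    ![(1 + R * k22) / (1 + R * (k21 + k22)), (1 + R * k21) / (1 + R * (k21 + k22))]]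


open Filter

lemma ratio_limit (a b : ℝ) (hb : 0 < b) :
    Tendsto (fun R : ℝ => (1 + R * a) / (1 + R * b)) atTop (nhds (a / b)) := by
  have h : ∀ᶠ R : ℝ in atTop, (1 + R * a) / (1 + R * b) = (R⁻¹ + a) / (R⁻¹ + b) := by
    filter_upwards [eventually_gt_atTop (0 : ℝ)] with R hR
    rw [div_eq_div_iff]
    · field_simp
    · positivity
    · positivity
  refine Tendsto.congr' (Filter.EventuallyEq.symm h) ?_
  have h0 : Tendsto (fun R : ℝ => R⁻¹) atTop (nhds 0) := tendsto_inv_atTop_zero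
  have hnum : Tendsto (fun R : ℝ => R⁻¹ + a) atTop (nhds a) := by
    simpa using h0.add tendsto_const_nhds
  have hden : Tendsto (fun R : ℝ => R⁻¹ + b) atTop (nhds b) := by
    simpa using h0.add tendsto_const_nhds
  exact hnum.div hden hb.ne'

lemma err_limit (b : ℝ) (hb : 0 < b) :
    Tendsto (fun R : ℝ => R / (1 + R * b) ^ 2) atTop (nhds 0) := by
  have h : ∀ᶠ R : ℝ in atTop, R / (1 + R * b) ^ 2 = R⁻¹ / (R⁻¹ + b) ^ 2 := by
    filter_upwards [eventually_gt_atTop (0 : ℝ)] with R hR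
    rw [div_eq_div_iff]
    · field_simp
    · positivity
    · positivity
  refine Tendsto.congr' (Filter.EventuallyEq.symm h) ?_
  have h0 : Tendsto (fun R : ℝ => R⁻¹) atTop (nhds 0) := tendsto_inv_atTop_zero
  have hden : Tendsto (fun R : ℝ => (R⁻¹ + b) ^ 2) atTop (nhds (b ^ 2)) := by
    have : Tendsto (fun R : ℝ => R⁻¹ + b) atTop (nhds b) := by
      simpa using h0.add tendsto_const_nhds
    simpa using this.pow 2
  have := h0.div hden (by positivity)
  rw [zero_div] at this
  exact this

/-- as `R → +∞`, `g_NA(z_NA(R), R)` converges to the stated limit `E`. -/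
theorem gNA_zNA_limit_at_top (k11 k12 k21 k22 : ℝ)
    (hk11 : 0 < k11) (hk12 : 0 < k12) (hk21 : 0 < k21) (hk22 : 0 < k22) :
    Filter.Tendsto (fun R => gNA k11 k12 k21 k22 (zNA k11 k12 k21 k22 R) R) Filter.atTop
      (nhds ((k12 / (k11 + k12)) / k11 * (1 - k12 / (2 * (k11 + k12)))
        + (k11 / (k11 + k12)) / k12 * (1 - k11 / (2 * (k11 + k12)))
        + (k22 / (k22 + k21)) / k21 * (1 - k22 / (2 * (k22 + k21)))
        + (k21 / (k22 + k21)) / k22 * (1 - k21 / (2 * (k22 + k21))))) := by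
  have hS1 : 0 < k11 + k12 := by linarith
  have hS2 : 0 < k21 + k22 := by linarith
  set F : ℝ → ℝ := fun R =>
    -(1/2) * (R / (1 + R * (k11 + k12)) ^ 2) - (1/2) * (R / (1 + R * (k21 + k22)) ^ 2)
      + ((1 + R * k12) / (1 + R * (k11 + k12))) / k11
      + ((1 + R * k11) / (1 + R * (k11 + k12))) / k12
      + ((1 + R * k22) / (1 + R * (k21 + k22))) / k21
      + ((1 + R * k21) / (1 + R * (k21 + k22))) / k22
      - ((1 + R * k12) / (1 + R * (k11 + k12))) ^ 2 / (2 * k11)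
      - ((1 + R * k11) / (1 + R * (k11 + k12))) ^ 2 / (2 * k12)
      - ((1 + R * k22) / (1 + R * (k21 + k22))) ^ 2 / (2 * k21)
      - ((1 + R * k21) / (1 + R * (k21 + k22))) ^ 2 / (2 * k22) with hF
  have heq : ∀ᶠ R : ℝ in atTop, gNA k11 k12 k21 k22 (zNA k11 k12 k21 k22 R) R = F R := by
    filter_upwards [eventually_gt_atTop (0 : ℝ)] with R hR
    have h1 : (0:ℝ) < 1 + R * (k11 + k12) := by positivity
    have h2 : (0:ℝ) < 1 + R * (k21 + k22) := by positivity
    simp only [gNA, zNA, hF, Matrix.cons_val_zero, Matrix.cons_val_one, Matrix.head_cons,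
      Matrix.head_fin_const]
    field_simp
    ring
  refine Tendsto.congr' (Filter.EventuallyEq.symm heq) ?_
  have e1 := err_limit (k11 + k12) hS1
  have e2 := err_limit (k21 + k22) hS2
  have r1 := ratio_limit k12 (k11 + k12) hS1
  have r2 := ratio_limit k11 (k11 + k12) hS1
  have r3 := ratio_limit k22 (k21 + k22) hS2
  have r4 := ratio_limit k21 (k21 + k22) hS2
  have hlim : Tendsto F atTop (nhds
      (-(1/2) * 0 - (1/2) * 0
        + (k12 / (k11 + k12)) / k11 + (k11 / (k11 + k12)) / k12
        + (k22 / (k21 + k22)) / k21 + (k21 / (k21 + k22)) / k22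
        - (k12 / (k11 + k12)) ^ 2 / (2 * k11) - (k11 / (k11 + k12)) ^ 2 / (2 * k12)
        - (k22 / (k21 + k22)) ^ 2 / (2 * k21) - (k21 / (k21 + k22)) ^ 2 / (2 * k22))) := by
    refine ((((((((( (tendsto_const_nhds.mul e1).sub (tendsto_const_nhds.mul e2)).add
      (r1.div_const k11)).add (r2.div_const k12)).add (r3.div_const k21)).add
      (r4.div_const k22)).sub ((r1.pow 2).div_const (2 * k11))).sub
      ((r2.pow 2).div_const (2 * k12))).sub ((r3.pow 2).div_const (2 * k21))).sub
      ((r4.pow 2).div_const (2 * k22)))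
  convert hlim using 2
  field_simp
  ring
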